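/- Let n, a, ℓ be positive integers with na ≤ ℓ, let σ be a permutation of {1, …, a}, let λ₁, …, λ_a : [0,1] → 𝕋 be continuous maps satisfying λ_{σ(p)}(0) = λ_p(1) for every p, and let w : [0,1] → U(a) be a continuous path with w(0) = I_a and w(1) = v_σ, where v_σ is the permutation matrix obtained from the identity matrix by permuting its rows according to σ. Set u(t) := diag(w(t) ⊗ Iₙ, I_{ℓ−na}) ∈ U(ℓ). Then there exists a (unique) *-homomorphism φ : C(𝕋, Mₙ) → C(𝕋, M_ℓ) such that for every f ∈ C(𝕋, Mₙ) and every t ∈ [0,1], φ(f)(e^{2πit}) = u(t) · diag(f(λ₁(t)), f(λ₂(t)), …, f(λ_a(t)), 0_{ℓ−na}) · u(t)*; in particular the right-hand side takes the same value at t = 0 and t = 1, so this formula is well defined on 𝕋. -/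

import Mathlib

open scoped Kronecker

/-- The canonical identification `Fin k ⊕ Fin (ℓ - k) ≃ Fin ℓ` when `k ≤ ℓ`. -/
noncomputable def sumEquiv {k ℓ : ℕ} (h : k ≤ ℓ) : Fin k ⊕ Fin (ℓ - k) ≃ Fin ℓ :=
  finSumFinEquiv.trans (finCongr (Nat.add_sub_cancel' h))

/-- `diagBlock h M` is the `ℓ × ℓ` matrix `diag(M 0, M 1, …, M (a-1), 0_{ℓ - n*a})`
built from `a` blocks of size `n × n`. -/
noncomputable def diagBlock {n a ℓ : ℕ} (h : n * a ≤ ℓ)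
    (M : Fin a → Matrix (Fin n) (Fin n) ℂ) : Matrix (Fin ℓ) (Fin ℓ) ℂ :=
  Matrix.reindex (sumEquiv h) (sumEquiv h)
    (Matrix.fromBlocks
      (Matrix.reindex finProdFinEquiv finProdFinEquiv (Matrix.blockDiagonal M)) 0 0 0)

/-- `conjU h W` is the `ℓ × ℓ` unitary `diag(W ⊗ Iₙ, I_{ℓ - n*a})` (in block form compatible
with `diagBlock`). -/
noncomputable def conjU {n a ℓ : ℕ} (h : n * a ≤ ℓ) (W : Matrix (Fin a) (Fin a) ℂ) :
    Matrix (Fin ℓ) (Fin ℓ) ℂ :=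
  Matrix.reindex (sumEquiv h) (sumEquiv h)
    (Matrix.fromBlocks
      (Matrix.reindex finProdFinEquiv finProdFinEquiv
        ((1 : Matrix (Fin n) (Fin n) ℂ) ⊗ₖ W)) 0 0 1)

/-- The permutation matrix `v_σ` obtained from the identity matrix by permuting its rows
according to `σ`. -/
def permMat {a : ℕ} (σ : Equiv.Perm (Fin a)) : Matrix (Fin a) (Fin a) ℂ :=
  Matrix.of fun i j => if σ j = i then (1 : ℂ) else 0

section Aux

open Matrix

variable {n a ℓ : ℕ} (h : n * a ≤ ℓ)

lemma reindex_mul {α β : Type*} [Fintype α] [Fintype β] [DecidableEq α] [DecidableEq β]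
    (e : α ≃ β) (A B : Matrix α α ℂ) :
    Matrix.reindex e e A * Matrix.reindex e e B = Matrix.reindex e e (A * B) := by
  simp [Matrix.reindex_apply]

lemma kron_one_ct (W : Matrix (Fin a) (Fin a) ℂ) :
    ((1 : Matrix (Fin n) (Fin n) ℂ) ⊗ₖ W)ᴴ = (1 : Matrix (Fin n) (Fin n) ℂ) ⊗ₖ Wᴴ := by
  ext ⟨i, p⟩ ⟨j, q⟩
  simp only [Matrix.conjTranspose_apply, Matrix.kroneckerMap_apply, Matrix.one_apply, eq_comm]
  split_ifs <;> simp

lemma conjU_one : conjU h (1 : Matrix (Fin a) (Fin a) ℂ) = 1 := by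
  simp [conjU, Matrix.one_kronecker_one, Matrix.fromBlocks_one]

lemma conjU_mul (W W' : Matrix (Fin a) (Fin a) ℂ) :
    conjU h W * conjU h W' = conjU h (W * W') := by
  simp only [conjU, reindex_mul, Matrix.fromBlocks_multiply, Matrix.mul_zero, Matrix.zero_mul,
    add_zero, zero_add, mul_one, Matrix.mul_one, ← Matrix.mul_kronecker_mul, Matrix.one_mul]

lemma star_conjU (W : Matrix (Fin a) (Fin a) ℂ) :
    star (conjU h W) = conjU h Wᴴ := by
  show (conjU h W)ᴴ = _
  simp only [conjU, Matrix.conjTranspose_reindex, Matrix.fromBlocks_conjTranspose,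
    Matrix.conjTranspose_zero, Matrix.conjTranspose_one, kron_one_ct]

lemma diagBlock_mul (M N : Fin a → Matrix (Fin n) (Fin n) ℂ) :
    diagBlock h M * diagBlock h N = diagBlock h (fun p => M p * N p) := by
  simp only [diagBlock, reindex_mul, Matrix.fromBlocks_multiply, Matrix.mul_zero,
    Matrix.zero_mul, add_zero, zero_add, Matrix.blockDiagonal_mul]

lemma diagBlock_add (M N : Fin a → Matrix (Fin n) (Fin n) ℂ) :
    diagBlock h (fun p => M p + N p) = diagBlock h M + diagBlock h N := by
  ext i j
  simp only [diagBlock, Matrix.reindex_apply, Matrix.submatrix_apply, Matrix.add_apply]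
  cases hs : (sumEquiv h).symm i <;> cases ht : (sumEquiv h).symm j <;>
    simp only [Matrix.fromBlocks_apply₁₁, Matrix.fromBlocks_apply₁₂, Matrix.fromBlocks_apply₂₁,
      Matrix.fromBlocks_apply₂₂, Matrix.submatrix_apply, Matrix.zero_apply, add_zero,
      Matrix.blockDiagonal_apply, Matrix.add_apply] <;> split_ifs <;> simp

lemma diagBlock_smul (c : ℂ) (M : Fin a → Matrix (Fin n) (Fin n) ℂ) :
    diagBlock h (fun p => c • M p) = c • diagBlock h M := by
  ext i j
  simp only [diagBlock, Matrix.reindex_apply, Matrix.submatrix_apply, Matrix.smul_apply]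
  cases hs : (sumEquiv h).symm i <;> cases ht : (sumEquiv h).symm j <;>
    simp only [Matrix.fromBlocks_apply₁₁, Matrix.fromBlocks_apply₁₂, Matrix.fromBlocks_apply₂₁,
      Matrix.fromBlocks_apply₂₂, Matrix.submatrix_apply, Matrix.zero_apply, smul_zero,
      Matrix.blockDiagonal_apply, Matrix.smul_apply] <;> split_ifs <;> simp

lemma diagBlock_zero : diagBlock h (fun _ => (0 : Matrix (Fin n) (Fin n) ℂ)) = 0 := by
  ext i j
  simp only [diagBlock, Matrix.reindex_apply, Matrix.submatrix_apply, Matrix.zero_apply]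
  cases hs : (sumEquiv h).symm i <;> cases ht : (sumEquiv h).symm j <;>
    simp [Matrix.blockDiagonal_apply]

lemma star_diagBlock (M : Fin a → Matrix (Fin n) (Fin n) ℂ) :
    star (diagBlock h M) = diagBlock h (fun p => star (M p)) := by
  show (diagBlock h M)ᴴ = _
  simp only [diagBlock, Matrix.conjTranspose_reindex, Matrix.fromBlocks_conjTranspose,
    Matrix.conjTranspose_zero, Matrix.blockDiagonal_conjTranspose]
  rfl



lemma sandwich (X B Y : Matrix (Fin n × Fin a) (Fin n × Fin a) ℂ) :
    (Matrix.reindex (sumEquiv h) (sumEquiv h)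
        (Matrix.fromBlocks (Matrix.reindex finProdFinEquiv finProdFinEquiv X) 0 0 1)) *
      (Matrix.reindex (sumEquiv h) (sumEquiv h)
        (Matrix.fromBlocks (Matrix.reindex finProdFinEquiv finProdFinEquiv B) 0 0 0)) *
      (Matrix.reindex (sumEquiv h) (sumEquiv h)
        (Matrix.fromBlocks (Matrix.reindex finProdFinEquiv finProdFinEquiv Y) 0 0 1)) =
    Matrix.reindex (sumEquiv h) (sumEquiv h)
      (Matrix.fromBlocks (Matrix.reindex finProdFinEquiv finProdFinEquiv (X * B * Y)) 0 0 0) := by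
  simp only [reindex_mul, Matrix.fromBlocks_multiply, Matrix.mul_zero, Matrix.zero_mul,
    add_zero, zero_add, Matrix.mul_one, Matrix.one_mul, Matrix.zero_mul, mul_zero,
    Matrix.reindex_apply, Matrix.submatrix_mul_equiv]

/-- generic permutation matrix over an index type -/
def pMat {ι : Type*} [DecidableEq ι] (τ : Equiv.Perm ι) : Matrix ι ι ℂ :=
  Matrix.of fun i j => if τ j = i then (1 : ℂ) else 0

lemma permMat_eq {σ : Equiv.Perm (Fin a)} : permMat σ = pMat σ := rfl

lemma pMat_mul {ι : Type*} [Fintype ι] [DecidableEq ι] (τ : Equiv.Perm ι) (A : Matrix ι ι ℂ) :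
    pMat τ * A = A.submatrix (⇑τ⁻¹) id := by
  ext i j
  simp only [Matrix.mul_apply, pMat, Matrix.of_apply, Matrix.submatrix_apply, id_eq,
    ite_mul, one_mul, zero_mul]
  have hk : ∀ k : ι, (if τ k = i then A k j else 0) = (if k = τ⁻¹ i then A k j else 0) := by
    intro k
    exact if_congr ⟨fun hh => by simp [← hh], fun hh => by simp [hh]⟩ rfl rfl
  simp only [hk]
  simp [Finset.sum_ite_eq']

lemma mul_pMat {ι : Type*} [Fintype ι] [DecidableEq ι] (τ : Equiv.Perm ι) (A : Matrix ι ι ℂ) :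
    A * pMat τ = A.submatrix id (⇑τ) := by
  ext i j
  simp only [Matrix.mul_apply, pMat, Matrix.of_apply, Matrix.submatrix_apply, id_eq,
    mul_ite, mul_one, mul_zero]
  simp [Finset.sum_ite_eq]

lemma pMat_conjTranspose {ι : Type*} [Fintype ι] [DecidableEq ι] (τ : Equiv.Perm ι) :
    (pMat τ)ᴴ = pMat τ⁻¹ := by
  ext i j
  have hiff : τ⁻¹ j = i ↔ τ i = j := by constructor <;> intro hh <;> simp [← hh]
  simp only [pMat, Matrix.conjTranspose_apply, Matrix.of_apply]
  by_cases hc : τ i = j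
  · simp [hc, Equiv.symm_apply_eq]
  · simp [hc, Equiv.symm_apply_eq, Ne.symm hc]

lemma pMat_conj {ι : Type*} [Fintype ι] [DecidableEq ι] (τ : Equiv.Perm ι) (A : Matrix ι ι ℂ) :
    pMat τ * A * (pMat τ)ᴴ = A.submatrix (⇑τ⁻¹) (⇑τ⁻¹) := by
  rw [pMat_conjTranspose, pMat_mul, mul_pMat, Matrix.submatrix_submatrix]
  rfl

lemma kron_one_perm (σ : Equiv.Perm (Fin a)) :
    (1 : Matrix (Fin n) (Fin n) ℂ) ⊗ₖ pMat σ =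
      pMat (Equiv.prodCongr (Equiv.refl (Fin n)) σ) := by
  ext ⟨i, p⟩ ⟨j, q⟩
  simp only [Matrix.kroneckerMap_apply, Matrix.one_apply, pMat, Matrix.of_apply,
    Equiv.prodCongr_apply, Equiv.coe_refl, Prod.map, id_eq, Prod.mk.injEq]
  by_cases h1 : i = j <;> by_cases h2 : σ q = p <;> simp [h1, h2, eq_comm]

lemma bd_submatrix (σ : Equiv.Perm (Fin a)) (M : Fin a → Matrix (Fin n) (Fin n) ℂ) :
    (Matrix.blockDiagonal M).submatrix (⇑(Equiv.prodCongr (Equiv.refl (Fin n)) σ)⁻¹)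
        (⇑(Equiv.prodCongr (Equiv.refl (Fin n)) σ)⁻¹) =
      Matrix.blockDiagonal (fun p => M (σ⁻¹ p)) := by
  ext ⟨i, p⟩ ⟨j, q⟩
  have hinv : ∀ x : Fin n × Fin a, (Equiv.prodCongr (Equiv.refl (Fin n)) σ)⁻¹ x =
      (x.1, σ⁻¹ x.2) := fun x => rfl
  simp only [Matrix.submatrix_apply, hinv, Matrix.blockDiagonal_apply]
  by_cases hpq : p = q
  · simp [hpq]
  · simp [hpq, fun hh => hpq (σ⁻¹.injective hh)]

lemma inner_perm (σ : Equiv.Perm (Fin a)) (M : Fin a → Matrix (Fin n) (Fin n) ℂ) :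
    ((1 : Matrix (Fin n) (Fin n) ℂ) ⊗ₖ permMat σ) * Matrix.blockDiagonal M *
        ((1 : Matrix (Fin n) (Fin n) ℂ) ⊗ₖ (permMat σ)ᴴ) =
      Matrix.blockDiagonal (fun p => M (σ⁻¹ p)) := by
  rw [← kron_one_ct, permMat_eq, kron_one_perm, pMat_conj, bd_submatrix]

lemma conjU_perm_diagBlock (σ : Equiv.Perm (Fin a)) (M : Fin a → Matrix (Fin n) (Fin n) ℂ) :
    conjU h (permMat σ) * diagBlock h M * star (conjU h (permMat σ)) =
      diagBlock h (fun p => M (σ⁻¹ p)) := by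
  rw [star_conjU]
  show Matrix.reindex _ _ _ * Matrix.reindex _ _ _ * Matrix.reindex _ _ _ = _
  rw [sandwich, inner_perm]
  rfl


lemma continuous_conjU : Continuous fun W : Matrix (Fin a) (Fin a) ℂ => conjU h W := by
  apply continuous_matrix
  intro i j
  simp only [conjU, Matrix.reindex_apply, Matrix.submatrix_apply]
  cases hs : (sumEquiv h).symm i <;> cases ht : (sumEquiv h).symm j <;>
    simp only [Matrix.fromBlocks_apply₁₁, Matrix.fromBlocks_apply₁₂, Matrix.fromBlocks_apply₂₁,
      Matrix.fromBlocks_apply₂₂, Matrix.submatrix_apply, Matrix.zero_apply,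
      Matrix.kroneckerMap_apply]
  · exact continuous_const.mul ((continuous_apply _).comp (continuous_apply _))
  · exact continuous_const
  · exact continuous_const
  · exact continuous_const

lemma continuous_diagBlock :
    Continuous fun M : Fin a → Matrix (Fin n) (Fin n) ℂ => diagBlock h M := by
  apply continuous_matrix
  intro i j
  simp only [diagBlock, Matrix.reindex_apply, Matrix.submatrix_apply]
  cases hs : (sumEquiv h).symm i <;> cases ht : (sumEquiv h).symm j <;>
    simp only [Matrix.fromBlocks_apply₁₁, Matrix.fromBlocks_apply₁₂, Matrix.fromBlocks_apply₂₁,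
      Matrix.fromBlocks_apply₂₂, Matrix.submatrix_apply, Matrix.zero_apply,
      Matrix.blockDiagonal_apply]
  case inl.inl =>
    split_ifs
    · exact (continuous_apply _).comp ((continuous_apply _).comp (continuous_apply _))
    · exact continuous_const
  all_goals exact continuous_const

end Aux

set_option maxHeartbeats 2000000

/-- Thomsen's existence result: given multiplicity data
`(a, σ, λ₁, …, λ_a, w)` with `n·a ≤ ℓ`, `λ_{σ(p)}(0) = λ_p(1)`, `w(0) = I`, `w(1) = v_σ`,
the formula `φ(f)(e^{2πit}) = u(t)·diag(f(λ₁(t)),…,f(λ_a(t)),0)·u(t)*` (with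
`u(t) = diag(w(t) ⊗ Iₙ, I_{ℓ-na})`) is well defined at the endpoints and determines a unique
*-homomorphism `φ : C(𝕋, Mₙ) → C(𝕋, M_ℓ)`. -/
theorem exists_unique_typeA_hom (n a ℓ : ℕ) (hn : 0 < n) (ha : 0 < a) (hℓ : 0 < ℓ)
    (h : n * a ≤ ℓ) (σ : Equiv.Perm (Fin a))
    (lam : Fin a → C(unitInterval, Circle))
    (hlam : ∀ p : Fin a, lam (σ p) 0 = lam p 1)
    (w : C(unitInterval, Matrix (Fin a) (Fin a) ℂ))
    (hw : ∀ t : unitInterval, w t ∈ Matrix.unitaryGroup (Fin a) ℂ)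
    (hw0 : w 0 = 1) (hw1 : w 1 = permMat σ) :
    (∀ f : C(Circle, Matrix (Fin n) (Fin n) ℂ),
      conjU h (w 0) * diagBlock h (fun p => f (lam p 0)) * star (conjU h (w 0)) =
        conjU h (w 1) * diagBlock h (fun p => f (lam p 1)) * star (conjU h (w 1))) ∧
    (∃! φ : C(Circle, Matrix (Fin n) (Fin n) ℂ) →⋆ₙₐ[ℂ] C(Circle, Matrix (Fin ℓ) (Fin ℓ) ℂ),
      ∀ (f : C(Circle, Matrix (Fin n) (Fin n) ℂ)) (t : unitInterval),
        φ f (Circle.exp (2 * Real.pi * (t : ℝ))) =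
          conjU h (w t) * diagBlock h (fun p => f (lam p t)) * star (conjU h (w t))) := by
  haveI : Fact ((0:ℝ) < 1) := ⟨zero_lt_one⟩
  -- the pointwise formula
  set Φ : C(Circle, Matrix (Fin n) (Fin n) ℂ) → unitInterval → Matrix (Fin ℓ) (Fin ℓ) ℂ :=
    fun f t => conjU h (w t) * diagBlock h (fun p => f (lam p t)) * star (conjU h (w t)) with hΦ
  -- endpoint compatibility
  have hend : ∀ f : C(Circle, Matrix (Fin n) (Fin n) ℂ), Φ f 0 = Φ f 1 := by
    intro f
    simp only [hΦ, hw0, hw1, conjU_one, star_one, one_mul, mul_one]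
    rw [conjU_perm_diagBlock]
    have hfun : (fun p => f ((lam (σ⁻¹ p)) 1)) = fun p => f ((lam p) 0) := by
      funext p
      rw [← hlam (σ⁻¹ p), ← Equiv.Perm.mul_apply, mul_inv_cancel, Equiv.Perm.one_apply]
    rw [hfun]
  -- unitarity of the conjugating unitaries
  have hu1 : ∀ t : unitInterval, star (conjU h (w t)) * conjU h (w t) = 1 := by
    intro t
    rw [star_conjU, conjU_mul, ← Matrix.star_eq_conjTranspose, (hw t).1, conjU_one]
  -- continuity of the formula
  have hΦcont : ∀ f, Continuous (Φ f) := by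
    intro f
    simp only [hΦ, Matrix.star_eq_conjTranspose]
    exact (((continuous_conjU h).comp w.continuous).matrix_mul
      ((continuous_diagBlock h).comp
        (continuous_pi fun p => f.continuous.comp (lam p).continuous))).matrix_mul
      (((continuous_conjU h).comp w.continuous).matrix_conjTranspose)
  -- pointwise algebraic identities
  have hΦadd : ∀ f f' t, Φ (f + f') t = Φ f t + Φ f' t := by
    intro f f' t
    simp only [hΦ, ContinuousMap.add_apply]
    rw [show (fun p => f (lam p t) + f' (lam p t)) =
      fun p => (fun q => f (lam q t)) p + (fun q => f' (lam q t)) p from rfl, diagBlock_add]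
    rw [Matrix.mul_add, Matrix.add_mul]
  have hΦsmul : ∀ (c : ℂ) f t, Φ (c • f) t = c • Φ f t := by
    intro c f t
    simp only [hΦ, ContinuousMap.smul_apply]
    rw [show (fun p => c • f (lam p t)) = fun p => c • (fun q => f (lam q t)) p from rfl,
      diagBlock_smul]
    rw [mul_smul_comm, smul_mul_assoc]
  have hΦzero : ∀ t, Φ 0 t = 0 := by
    intro t
    simp only [hΦ, ContinuousMap.zero_apply]
    rw [show (fun _ : Fin a => (0 : Matrix (Fin n) (Fin n) ℂ)) =
      fun _ : Fin a => (0 : Matrix (Fin n) (Fin n) ℂ) from rfl, diagBlock_zero]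
    rw [Matrix.mul_zero, Matrix.zero_mul]
  have hΦmul : ∀ f f' t, Φ (f * f') t = Φ f t * Φ f' t := by
    intro f f' t
    simp only [hΦ, ContinuousMap.mul_apply]
    have : conjU h (w t) * diagBlock h (fun p => f (lam p t)) * star (conjU h (w t)) *
        (conjU h (w t) * diagBlock h (fun p => f' (lam p t)) * star (conjU h (w t))) =
        conjU h (w t) * (diagBlock h (fun p => f (lam p t)) *
          (star (conjU h (w t)) * conjU h (w t)) * diagBlock h (fun p => f' (lam p t))) *
          star (conjU h (w t)) := by
      noncomm_ring
    rw [this, hu1 t, Matrix.mul_one, diagBlock_mul]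
  have hΦstar : ∀ f t, Φ (star f) t = star (Φ f t) := by
    intro f t
    simp only [hΦ, ContinuousMap.star_apply]
    rw [star_mul, star_mul, star_star, star_diagBlock, mul_assoc]
  -- the homeomorphism `AddCircle 1 ≃ₜ Circle`
  set e : AddCircle (1:ℝ) ≃ₜ Circle := AddCircle.homeomorphCircle one_ne_zero with he_def
  have he : ∀ t : unitInterval, e ((t : ℝ) : AddCircle (1:ℝ)) = Circle.exp (2 * Real.pi * t) := by
    intro t
    rw [he_def, AddCircle.homeomorphCircle_apply, AddCircle.toCircle_apply_mk, div_one]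
  -- the real-periodic extension
  set g : C(Circle, Matrix (Fin n) (Fin n) ℂ) → ℝ → Matrix (Fin ℓ) (Fin ℓ) ℂ :=
    fun f x => Φ f (Set.projIcc 0 1 zero_le_one x) with hg_def
  have hg01 : ∀ f, g f 0 = g f (0 + 1) := by
    intro f
    simp only [hg_def, zero_add, Set.projIcc_left, Set.projIcc_right]
    exact hend f
  have hgc : ∀ f, Continuous (g f) := fun f => (hΦcont f).comp continuous_projIcc
  set L : C(Circle, Matrix (Fin n) (Fin n) ℂ) → AddCircle (1:ℝ) → Matrix (Fin ℓ) (Fin ℓ) ℂ :=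
    fun f => AddCircle.liftIco 1 0 (g f) with hL_def
  have hLc : ∀ f, Continuous (L f) :=
    fun f => AddCircle.liftIco_continuous (hg01 f) (hgc f).continuousOn
  have hLmk : ∀ f (t : unitInterval), L f (((t : ℝ) : AddCircle (1:ℝ))) = Φ f t := by
    intro f t
    rcases lt_or_eq_of_le t.2.2 with ht | ht
    · have hx : (t : ℝ) ∈ Set.Ico (0:ℝ) (0 + 1) := ⟨t.2.1, by simpa using ht⟩
      show AddCircle.liftIco 1 0 (g f) (((t : ℝ) : AddCircle (1:ℝ))) = Φ f t
      rw [AddCircle.liftIco_coe_apply hx]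
      show Φ f (Set.projIcc 0 1 zero_le_one (t : ℝ)) = Φ f t
      rw [Set.projIcc_of_mem _ t.2]
    · have ht1 : t = 1 := Subtype.ext ht
      have h10 : (((t : ℝ) : AddCircle (1:ℝ))) = (((0:ℝ) : AddCircle (1:ℝ))) := by
        rw [ht1]
        show (((1:ℝ) : AddCircle (1:ℝ))) = _
        rw [AddCircle.coe_period]
        norm_num
      have hx0 : (0:ℝ) ∈ Set.Ico (0:ℝ) (0 + 1) := ⟨le_refl _, by norm_num⟩
      rw [h10]
      show AddCircle.liftIco 1 0 (g f) (((0:ℝ) : AddCircle (1:ℝ))) = Φ f t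
      rw [AddCircle.liftIco_coe_apply hx0]
      show Φ f (Set.projIcc 0 1 zero_le_one 0) = Φ f t
      have hpi : Set.projIcc (0:ℝ) 1 zero_le_one 0 = (0 : unitInterval) := Set.projIcc_left _
      rw [hpi, hend f, ht1]
  -- the continuous maps on the circle
  set φfun : C(Circle, Matrix (Fin n) (Fin n) ℂ) → C(Circle, Matrix (Fin ℓ) (Fin ℓ) ℂ) :=
    fun f => ⟨fun z => L f (e.symm z), (hLc f).comp e.symm.continuous⟩ with hφ_def
  have hprop : ∀ f (t : unitInterval),
      φfun f (Circle.exp (2 * Real.pi * (t : ℝ))) = Φ f t := by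
    intro f t
    have : e.symm (Circle.exp (2 * Real.pi * (t : ℝ))) = ((t : ℝ) : AddCircle (1:ℝ)) := by
      rw [← he t, Homeomorph.symm_apply_apply]
    show L f (e.symm (Circle.exp (2 * Real.pi * (t : ℝ)))) = Φ f t
    rw [this, hLmk]
  -- every point of the circle is covered by a parameter in the unit interval
  have key : ∀ z : Circle, ∃ t : unitInterval,
      z = Circle.exp (2 * Real.pi * (t : ℝ)) ∧ ∀ f, φfun f z = Φ f t := by
    intro z
    set q := e.symm z with hq
    set x : Set.Ico (0:ℝ) (0 + 1) := AddCircle.equivIco 1 0 q with hx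
    have hxq : (((x : ℝ) : AddCircle (1:ℝ))) = q := (AddCircle.equivIco 1 0).symm_apply_apply q
    have hxI : (x : ℝ) ∈ Set.Icc (0:ℝ) 1 := ⟨x.2.1, by
      have := x.2.2; simp only [zero_add] at this; exact le_of_lt this⟩
    refine ⟨⟨(x : ℝ), hxI⟩, ?_, ?_⟩
    · rw [← he ⟨(x : ℝ), hxI⟩]
      show z = e (((x : ℝ) : AddCircle (1:ℝ)))
      rw [hxq, hq, Homeomorph.apply_symm_apply]
    · intro f
      show L f (e.symm z) = Φ f ⟨(x : ℝ), hxI⟩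
      rw [← hq, ← hxq]
      exact hLmk f ⟨(x : ℝ), hxI⟩
  -- assemble the star homomorphism
  refine ⟨fun f => hend f, ?_⟩
  refine ⟨{ toFun := φfun
            map_smul' := ?_
            map_zero' := ?_
            map_add' := ?_
            map_mul' := ?_
            map_star' := ?_ }, hprop, ?_⟩
  · intro c f
    apply ContinuousMap.ext; intro z
    obtain ⟨t, -, hz⟩ := key z
    simp only [ContinuousMap.smul_apply, hz, hΦsmul, MonoidHom.id_apply]
  · apply ContinuousMap.ext; intro z
    obtain ⟨t, -, hz⟩ := key z
    simp only [ContinuousMap.zero_apply, hz, hΦzero]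
  · intro f f'
    apply ContinuousMap.ext; intro z
    obtain ⟨t, -, hz⟩ := key z
    simp only [ContinuousMap.add_apply, hz, hΦadd]
  · intro f f'
    apply ContinuousMap.ext; intro z
    obtain ⟨t, -, hz⟩ := key z
    simp only [ContinuousMap.mul_apply, hz, hΦmul]
  · intro f
    apply ContinuousMap.ext; intro z
    obtain ⟨t, -, hz⟩ := key z
    simp only [ContinuousMap.star_apply, hz, hΦstar]
  · intro ψ hψ
    apply NonUnitalStarAlgHom.ext
    intro f
    apply ContinuousMap.ext; intro z
    obtain ⟨t, hzt, hz⟩ := key z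
    rw [hzt, hψ f t]
    exact (hprop f t).symm
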